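/- arXiv:1008.3554 — 7 statements merged into one kernel-verified Lean document; each statement's English description precedes it below -/
import Mathlib

section
/- For all natural numbers m and n, the probabilists' Hermite polynomials satisfy the product formula He_m(x)·He_n(x) = ∑_{p=0}^{min(m,n)} binom(m,p)·binom(n,p)·p!·He_{m+n−2p}(x), as an identity of polynomials. -/
open Polynomial Finset

private lemma derivative_hermite_succ (n : ℕ) :
    Polynomial.derivative (Polynomial.hermite (n + 1)) = ((n : ℤ) + 1) • Polynomial.hermite n := by
  induction n with
  | zero => simp [hermite_one, hermite_zero]
  | succ n ih =>
    rw [hermite_succ (n + 1), derivative_sub, derivative_mul, derivative_X, ih, derivative_smul,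
      one_mul, mul_smul_comm]
    rw [add_sub_assoc, ← smul_sub, ← hermite_succ]
    push_cast
    module

private lemma coeff_id (m n p : ℕ) :
    ((m.choose (p+1)) * ((n+1).choose (p+1)) * (p+1).factorial : ℤ)
      + ((n : ℤ) + 1) * (m.choose p * n.choose p * p.factorial)
      = ((m+1).choose (p+1) * ((n+1).choose (p+1)) * (p+1).factorial : ℤ) := by
  have h : (((n+1) * n.choose p : ℕ) : ℤ) = (((n+1).choose (p+1) * (p+1) : ℕ) : ℤ) := by
    exact_mod_cast congrArg (Nat.cast (R := ℤ)) (Nat.add_one_mul_choose_eq n p)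
  push_cast [Nat.choose_succ_succ (m) (p), Nat.factorial_succ] at *
  linear_combination ((m.choose p : ℤ) * p.factorial) * h

private lemma hermite_key (m : ℕ) : ∀ n : ℕ,
    Polynomial.hermite m * Polynomial.hermite n =
      ∑ p ∈ Finset.range (m + n + 1),
        ((m.choose p * n.choose p * p.factorial : ℤ)) • Polynomial.hermite (m + n - 2 * p) := by
  induction m with
  | zero =>
    intro n
    rw [Finset.sum_eq_single 0]
    · simp [hermite_zero]
    · intro p hp hp0
      rw [Nat.choose_eq_zero_of_lt (by omega : 0 < p)]
      simp
    · simp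
  | succ m ih =>
    intro n
    match n with
    | 0 =>
      rw [Finset.sum_eq_single 0]
      · simp [hermite_zero]
      · intro p hp hp0
        rw [Nat.choose_eq_zero_of_lt (show (0:ℕ) < p by omega)]
        simp
      · simp
    | (n' + 1) =>
      have hd : derivative (hermite m) * hermite (n'+1) =
          derivative (hermite m * hermite (n'+1)) - hermite m * derivative (hermite (n'+1)) := by
        rw [derivative_mul]; ring
      have step : hermite (m + 1) * hermite (n'+1) =
          (X * (hermite m * hermite (n'+1)) - derivative (hermite m * hermite (n'+1)))
            + hermite m * derivative (hermite (n'+1)) := by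
        rw [hermite_succ, sub_mul, hd]; ring
      rw [step, ih (n'+1), derivative_hermite_succ n', mul_smul_comm, ih n']
      -- first piece
      have first : X * (∑ p ∈ Finset.range (m + (n'+1) + 1),
            ((m.choose p * (n'+1).choose p * p.factorial : ℤ)) • hermite (m + (n'+1) - 2 * p))
          - derivative (∑ p ∈ Finset.range (m + (n'+1) + 1),
            ((m.choose p * (n'+1).choose p * p.factorial : ℤ)) • hermite (m + (n'+1) - 2 * p))
          = ∑ p ∈ Finset.range (m + (n'+1) + 1),
            ((m.choose p * (n'+1).choose p * p.factorial : ℤ)) • hermite (m + 1 + (n'+1) - 2 * p) := by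
        rw [Finset.mul_sum, derivative_sum, ← Finset.sum_sub_distrib]
        refine Finset.sum_congr rfl fun p hp => ?_
        rw [mul_smul_comm, derivative_smul, ← smul_sub, ← hermite_succ]
        by_cases h2 : 2 * p ≤ m + (n'+1)
        · rw [show m + (n'+1) - 2*p + 1 = m + 1 + (n'+1) - 2*p from by omega]
        · have : m.choose p = 0 ∨ (n'+1).choose p = 0 := by
            rcases Nat.lt_or_ge m p with h | h
            · exact Or.inl (Nat.choose_eq_zero_of_lt h)
            · exact Or.inr (Nat.choose_eq_zero_of_lt (by omega))
          rcases this with h | h <;> simp [h]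
      rw [first]
      clear first step hd
      -- second piece
      rw [Finset.smul_sum]
      -- rewrite target sum: range (m+1+(n'+1)+1) = range ((m+(n'+1)+1)+1)
      have hrange : m + 1 + (n'+1) + 1 = (m + (n'+1) + 1) + 1 := by omega
      rw [show m + 1 + (n'+1) + 1 = (m + (n'+1) + 1) + 1 by omega, Finset.sum_range_succ'
        (fun p => (((m+1).choose p * (n'+1).choose p * p.factorial : ℤ)) • hermite (m + 1 + (n'+1) - 2 * p))]
      -- split first sum
      rw [Finset.sum_range_succ' (fun p =>
        ((m.choose p * (n'+1).choose p * p.factorial : ℤ)) • hermite (m + 1 + (n'+1) - 2 * p))]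
      -- shrink RHS shifted sum: drop its vanishing top term
      rw [Finset.sum_range_succ (fun p =>
        (((m+1).choose (p+1) * (n'+1).choose (p+1) * (p+1).factorial : ℤ)) • hermite (m + 1 + (n'+1) - 2 * (p+1)))]
      have hz2 : (((m+1).choose (m + (n'+1) + 1) : ℕ) : ℤ) = 0 := by
        norm_cast; exact Nat.choose_eq_zero_of_lt (by omega)
      rw [hz2]
      simp only [zero_mul, zero_smul, add_zero]
      rw [add_right_comm]
      rw [show m + (n'+1) = m + n' + 1 from by omega]
      congr 1
      · rw [← Finset.sum_add_distrib]
        refine Finset.sum_congr rfl fun p hp => ?_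
        have hidx : m + 1 + (n'+1) - 2 * (p + 1) = m + n' - 2 * p := by omega
        rw [hidx, smul_smul, ← add_smul]
        congr 1
        have := coeff_id m n' p
        push_cast at this ⊢
        linear_combination this
      · simp

/-- Product formula for the probabilists' Hermite polynomials:
`He_m · He_n = ∑_{p=0}^{min m (n'+1)} (m choose p)·((n'+1) choose p)·p! · He_{m+(n'+1)-2p}`. -/
theorem hermite_product_formula (m n : ℕ) :
    Polynomial.hermite m * Polynomial.hermite n =
      ∑ p ∈ Finset.range (min m n + 1),
        ((m.choose p * n.choose p * p.factorial : ℤ)) • Polynomial.hermite (m + n - 2 * p) := by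
  rw [hermite_key m n]
  symm
  apply Finset.sum_subset
  · intro p hp
    simp only [Finset.mem_range] at *
    omega
  · intro p hp hnp
    simp only [Finset.mem_range] at *
    have : m.choose p = 0 ∨ n.choose p = 0 := by
      rcases Nat.lt_or_ge m p with h | h
      · exact Or.inl (Nat.choose_eq_zero_of_lt h)
      · exact Or.inr (Nat.choose_eq_zero_of_lt (by omega))
    rcases this with h | h <;> simp [h]
end

section
/- Let θ and κ be multi-indices and for a multi-index α and x : ℕ → ℝ set Ξ_α(x) = ∏_k He_{α_k}(x_k)/√(α_k!) (a finite product). Then for every x : ℕ → ℝ one has Ξ_θ(x)·Ξ_κ(x) = ∑_{p} [√(θ!·κ!·(θ+κ−2p)!)/(p!·(θ−p)!·(κ−p)!)]·Ξ_{θ+κ−2p}(x), where the (finite) sum is over all multi-indices p with p_k ≤ min(θ_k, κ_k) for all k. (This is the coefficient form of the paper's Proposition expressing the ordinary product of two Cameron–Martin basis elements ξ_θ·ξ_κ as ∑_{n≥0} (D^n ξ_θ ◊ D^n ξ_κ)/n!, where D is the Malliavin derivative and ◊ the Wick product.) -/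
/-- The factorial `α! = ∏_k (α_k)!` of a multi-index. -/
def mfact (α : ℕ →₀ ℕ) : ℕ := α.prod fun _ n => n.factorial

/-- The Cameron–Martin type normalized Hermite product
`Ξ_α(x) = ∏_k He_{α_k}(x_k)/√(α_k!)` (a finite product). -/
noncomputable def hermiteXi (α : ℕ →₀ ℕ) (x : ℕ → ℝ) : ℝ :=
  α.prod fun k n => Polynomial.aeval (x k) (Polynomial.hermite n) / Real.sqrt (n.factorial)

open Polynomial Finset

theorem deriv_hermite (n : ℕ) : derivative (hermite n) = n • hermite (n - 1) := by
  induction n using Nat.strong_induction_on with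
  | _ n ih =>
    match n with
    | 0 => simp [hermite_zero]
    | 1 => simp [hermite_one, hermite_zero]
    | (k+2) =>
      rw [hermite_succ, derivative_sub, derivative_mul, derivative_X, one_mul,
        ih (k+1) (by omega), Nat.add_sub_cancel, derivative_smul, ih k (by omega)]
      have h2 : X * hermite k = hermite (k+1) + (k:ℕ) • hermite (k-1) := by
        rw [hermite_succ, ih k (by omega)]; ring
      rw [show k + 2 - 1 = k + 1 from rfl, mul_smul_comm, h2]
      module


lemma key_id (m k i : ℕ) :
    Nat.choose m (i+1) * Nat.choose (k+1) (i+1) * (i+1).factorial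
      + k * (Nat.choose m i * Nat.choose (k-1) i * i.factorial)
    = Nat.choose m (i+1) * Nat.choose k (i+1) * (i+1).factorial
      + Nat.choose m i * Nat.choose k i * i.factorial * (m + k - 2*i) := by
  rcases lt_or_ge m i with hm | hm
  · have h1 : Nat.choose m (i+1) = 0 := Nat.choose_eq_zero_of_lt (by omega)
    have h2 : Nat.choose m i = 0 := Nat.choose_eq_zero_of_lt hm
    simp [h1, h2]
  rcases lt_or_ge i k with hik | hik
  · -- main case i < k, i ≤ m
    have hp : Nat.choose (k+1) (i+1) = Nat.choose k i + Nat.choose k (i+1) :=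
      Nat.choose_succ_succ k i
    have h1 : Nat.choose m (i+1) * (i+1) = Nat.choose m i * (m - i) :=
      Nat.choose_succ_right_eq m i
    have h3 : k * Nat.choose (k-1) i = Nat.choose k i * (k - i) := by
      obtain ⟨kk, rfl⟩ : ∃ kk, k = kk + 1 := ⟨k - 1, by omega⟩
      simp only [Nat.add_sub_cancel]
      rw [Nat.add_one_mul_choose_eq, Nat.choose_succ_right_eq]
    have hc : (m - i) + (k - i) = m + k - 2*i := by omega
    rw [hp, Nat.factorial_succ]
    zify at h1 h3 hc ⊢
    linear_combination ((i.factorial : ℤ) * Nat.choose k i) * h1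
      + ((i.factorial : ℤ) * Nat.choose m i) * h3
      + ((i.factorial : ℤ) * Nat.choose m i * Nat.choose k i) * hc
  · -- i ≥ k
    rcases eq_or_lt_of_le hik with rfl | hlt
    · have h0 : k * Nat.choose (k-1) k = 0 := by
        rcases k with _ | kk
        · simp
        · simp [Nat.choose_eq_zero_of_lt (show kk + 1 - 1 < kk + 1 by omega)]
      have h0' : Nat.choose k (k+1) = 0 := Nat.choose_eq_zero_of_lt (by omega)
      have h1 : Nat.choose m (k+1) * (k+1) = Nat.choose m k * (m - k) :=
        Nat.choose_succ_right_eq m k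
      have hmk : m + k - 2*k = m - k := by omega
      rw [h0', Nat.choose_self, hmk, Nat.factorial_succ,
        show k * (Nat.choose m k * Nat.choose (k-1) k * k.factorial)
          = (k * Nat.choose (k-1) k) * (Nat.choose m k * k.factorial) by ring, h0]
      simp only [Nat.choose_self, mul_one]
      zify at h1 ⊢
      linear_combination ((k.factorial : ℤ)) * h1
    · have e1 : Nat.choose (k+1) (i+1) = 0 := Nat.choose_eq_zero_of_lt (by omega)
      have e2 : Nat.choose k (i+1) = 0 := Nat.choose_eq_zero_of_lt (by omega)
      have e3 : Nat.choose k i = 0 := Nat.choose_eq_zero_of_lt hlt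
      have e4 : Nat.choose (k-1) i = 0 := Nat.choose_eq_zero_of_lt (by omega)
      simp [e1, e2, e3, e4]

theorem X_mul_hermite (n : ℕ) : X * hermite n = hermite (n+1) + n • hermite (n-1) := by
  rw [hermite_succ, deriv_hermite]; ring

theorem hermite_mul (m n : ℕ) : hermite m * hermite n =
    ∑ j ∈ range (n+1), (m.choose j * n.choose j * j.factorial) • hermite (m + n - 2*j) := by
  induction n using Nat.strong_induction_on with
  | _ n ih =>
    match n with
    | 0 => simp
    | (k+1) =>
      have step : hermite m * hermite (k+1) + k • (hermite m * hermite (k-1))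
          = X * (hermite m * hermite k) := by
        rw [hermite_succ, deriv_hermite]; ring
      have e1 : ∑ j ∈ range (k+2), (m.choose j * k.choose j * j.factorial) • hermite (m + (k+1) - 2*j)
          = ∑ j ∈ range (k+1), (m.choose j * k.choose j * j.factorial) • hermite ((m + k - 2*j)+1) := by
        rw [Finset.sum_range_succ, Nat.choose_eq_zero_of_lt (show k < k+1 by omega)]
        simp only [mul_zero, zero_mul, zero_smul, add_zero]
        apply Finset.sum_congr rfl
        intro j hj
        by_cases h : m.choose j * k.choose j = 0
        · rw [h, zero_mul, zero_smul, zero_smul]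
        · have hm : j ≤ m := by
            by_contra hc; exact h (by rw [Nat.choose_eq_zero_of_lt (show m < j by omega)]; ring)
          have hk : j ≤ k := by
            by_contra hc; exact h (by rw [Nat.choose_eq_zero_of_lt (show k < j by omega)]; ring)
          rw [show m + (k+1) - 2*j = (m + k - 2*j)+1 by omega]
      have e2 : ∑ j ∈ range (k+2), (if j = 0 then 0 else
            (m.choose (j-1) * k.choose (j-1) * (j-1).factorial) * (m + k - 2*(j-1)))
              • hermite (m + (k+1) - 2*j)
          = ∑ j ∈ range (k+1),
              ((m.choose j * k.choose j * j.factorial) * (m + k - 2*j)) • hermite ((m + k - 2*j)-1) := by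
        rw [Finset.sum_range_succ']
        simp only [Nat.succ_ne_zero, if_false, Nat.add_sub_cancel, if_true, ite_true, zero_smul, add_zero]
        apply Finset.sum_congr rfl
        intro j hj
        rw [show m + (k+1) - 2*(j+1) = (m + k - 2*j)-1 by omega]
      have e3 : ∑ j ∈ range (k+2), (if j = 0 then 0 else
            k * (m.choose (j-1) * (k-1).choose (j-1) * (j-1).factorial))
              • hermite (m + (k+1) - 2*j)
          = ∑ j ∈ range (k-1+1),
              (k * (m.choose j * (k-1).choose j * j.factorial)) • hermite (m + (k-1) - 2*j) := by
        cases k with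
        | zero => simp
        | succ kk =>
          rw [Finset.sum_range_succ']
          simp only [Nat.succ_ne_zero, if_false, Nat.add_sub_cancel, if_true, ite_true, zero_smul, add_zero]
          rw [Finset.sum_range_succ, Nat.choose_eq_zero_of_lt (show kk < kk+1 by omega)]
          simp only [mul_zero, zero_mul, zero_smul, add_zero]
          apply Finset.sum_congr rfl
          intro j hj
          rw [show m + (kk+1+1) - 2*(j+1) = m + kk - 2*j by omega]
      have main : (∑ j ∈ range (k+1+1),
            (m.choose j * (k+1).choose j * j.factorial) • hermite (m + (k+1) - 2*j))
          + k • (hermite m * hermite (k-1)) = X * (hermite m * hermite k) := by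
        rw [ih k (by omega), ih (k-1) (by omega), Finset.mul_sum, smul_sum]
        have hx : ∀ j ∈ range (k+1), X * ((m.choose j * k.choose j * j.factorial) • hermite (m + k - 2*j))
            = (m.choose j * k.choose j * j.factorial) • hermite ((m + k - 2*j)+1)
              + ((m.choose j * k.choose j * j.factorial) * (m + k - 2*j)) • hermite ((m + k - 2*j)-1) := by
          intro j _
          rw [mul_smul_comm, X_mul_hermite, smul_add, smul_smul]
        rw [Finset.sum_congr rfl hx, Finset.sum_add_distrib, ← e1, ← e2]
        have hy : ∀ j ∈ range (k-1+1), k • ((m.choose j * (k-1).choose j * j.factorial) • hermite (m + (k-1) - 2*j))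
            = (k * (m.choose j * (k-1).choose j * j.factorial)) • hermite (m + (k-1) - 2*j) := by
          intro j _; rw [smul_smul]
        rw [Finset.sum_congr rfl hy, ← e3, ← Finset.sum_add_distrib, ← Finset.sum_add_distrib]
        apply Finset.sum_congr rfl
        intro j hj
        rw [← add_smul, ← add_smul]
        congr 1
        match j with
        | 0 => simp
        | (i+1) =>
          simp only [Nat.succ_ne_zero, if_false, Nat.add_sub_cancel]
          exact key_id m k i
      exact add_right_cancel (step.trans main.symm)

noncomputable def Hr (n : ℕ) (t : ℝ) : ℝ :=
  Polynomial.aeval t (Polynomial.hermite n) / Real.sqrt (n.factorial)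

lemma Hr_zero (t : ℝ) : Hr 0 t = 1 := by
  simp [Hr, Polynomial.hermite_zero]

lemma Hr_mul (m n : ℕ) (t : ℝ) :
    Hr m t * Hr n t = ∑ j ∈ range (min m n + 1),
      (Real.sqrt ((m.factorial : ℝ) * (n.factorial : ℝ) * ((m+n-2*j).factorial : ℝ)) /
        ((j.factorial : ℝ) * ((m-j).factorial : ℝ) * ((n-j).factorial : ℝ))) * Hr (m+n-2*j) t := by
  have base := congrArg (Polynomial.aeval t) (hermite_mul m n)
  simp only [map_mul, map_sum, map_nsmul, nsmul_eq_mul, map_natCast] at base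
  have sqpos : ∀ a : ℕ, (0:ℝ) < Real.sqrt a.factorial := fun a =>
    Real.sqrt_pos.mpr (by exact_mod_cast a.factorial_pos)
  rw [Hr, Hr, div_mul_div_comm, base, Finset.sum_div]
  rw [← Finset.sum_subset (Finset.range_subset_range.mpr (by omega : min m n + 1 ≤ n + 1))
    (by
      intro j hj hj'
      have hmj : m < j := by
        simp only [Finset.mem_range] at hj hj'
        omega
      simp [Nat.choose_eq_zero_of_lt hmj])]
  apply Finset.sum_congr rfl
  intro j hj
  simp only [Finset.mem_range] at hj
  have hjm : j ≤ m := by omega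
  have hjn : j ≤ n := by omega
  have hfact : (m.choose j * n.choose j * j.factorial) * (j.factorial * (m-j).factorial * (n-j).factorial)
      = m.factorial * n.factorial := by
    have h1 := Nat.choose_mul_factorial_mul_factorial hjm
    have h2 := Nat.choose_mul_factorial_mul_factorial hjn
    calc (m.choose j * n.choose j * j.factorial) * (j.factorial * (m-j).factorial * (n-j).factorial)
        = (m.choose j * j.factorial * (m-j).factorial) * (n.choose j * j.factorial * (n-j).factorial) := by ring
      _ = m.factorial * n.factorial := by rw [h1, h2]
  rw [Hr]
  set N := m + n - 2*j
  set c : ℝ := ((m.choose j * n.choose j * j.factorial : ℕ) : ℝ)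
  set d : ℝ := ((j.factorial : ℝ) * ((m-j).factorial : ℝ) * ((n-j).factorial : ℝ))
  have hd : 0 < d := by positivity
  have hcd : c * d = (m.factorial : ℝ) * (n.factorial : ℝ) := by
    rw [show d = ((j.factorial * (m-j).factorial * (n-j).factorial : ℕ) : ℝ) by push_cast; ring]
    rw [← Nat.cast_mul, hfact]
    push_cast; ring
  have hs : Real.sqrt ((m.factorial : ℝ) * (n.factorial : ℝ) * (N.factorial : ℝ))
      = Real.sqrt m.factorial * Real.sqrt n.factorial * Real.sqrt N.factorial := by
    rw [Real.sqrt_mul (by positivity), Real.sqrt_mul (by positivity)]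
  have hsm := sqpos m
  have hsn := sqpos n
  have hsN := sqpos N
  have hm2 : Real.sqrt (m.factorial : ℝ) * Real.sqrt (m.factorial : ℝ) = (m.factorial : ℝ) :=
    Real.mul_self_sqrt (by positivity)
  have hn2 : Real.sqrt (n.factorial : ℝ) * Real.sqrt (n.factorial : ℝ) = (n.factorial : ℝ) :=
    Real.mul_self_sqrt (by positivity)
  have coeff_eq : Real.sqrt ((m.factorial : ℝ) * (n.factorial : ℝ) * (N.factorial : ℝ)) / d
      = c * Real.sqrt N.factorial / (Real.sqrt m.factorial * Real.sqrt n.factorial) := by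
    rw [hs, div_eq_div_iff hd.ne' (by positivity)]
    linear_combination (Real.sqrt n.factorial * Real.sqrt n.factorial * Real.sqrt N.factorial) * hm2
      + ((m.factorial : ℝ) * Real.sqrt N.factorial) * hn2 - Real.sqrt N.factorial * hcd
  rw [coeff_eq]
  field_simp

lemma sqrt_prod {ι : Type*} (s : Finset ι) (f : ι → ℝ) (hf : ∀ i ∈ s, 0 ≤ f i) :
    Real.sqrt (∏ i ∈ s, f i) = ∏ i ∈ s, Real.sqrt (f i) := by
  induction s using Finset.cons_induction with
  | empty => simp
  | cons a s ha ih =>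
    rw [Finset.prod_cons, Finset.prod_cons, Real.sqrt_mul (hf a (Finset.mem_cons_self a s)),
      ih (fun i hi => hf i (Finset.mem_cons_of_mem hi))]

/-- Product formula for normalized Hermite multi-index products:
`Ξ_θ·Ξ_κ = ∑_{p ≤ θ ⊓ κ} √(θ!κ!(θ+κ-2p)!)/(p!(θ-p)!(κ-p)!) · Ξ_{θ+κ-2p}`. -/
theorem hermiteXi_mul (θ κ : ℕ →₀ ℕ) (x : ℕ → ℝ) :
    hermiteXi θ x * hermiteXi κ x =
      ∑ p ∈ (Finset.Iic θ).filter (fun p => p ≤ κ),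
        (Real.sqrt ((mfact θ : ℝ) * (mfact κ : ℝ) * (mfact (θ + κ - 2 • p) : ℝ)) /
            ((mfact p : ℝ) * (mfact (θ - p) : ℝ) * (mfact (κ - p) : ℝ))) *
          hermiteXi (θ + κ - 2 • p) x := by
  classical
  set S := θ.support ∪ κ.support with hS
  have hθS : θ.support ⊆ S := Finset.subset_union_left
  have hκS : κ.support ⊆ S := Finset.subset_union_right
  have Xi_eq : ∀ (α : ℕ →₀ ℕ), α.support ⊆ S → hermiteXi α x = ∏ k ∈ S, Hr (α k) (x k) := by
    intro α hα
    show α.prod (fun k n => Hr n (x k)) = _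
    exact Finsupp.prod_of_support_subset α hα _ (fun i _ => Hr_zero (x i))
  have mf_eq : ∀ (α : ℕ →₀ ℕ), α.support ⊆ S → (mfact α : ℝ) = ∏ k ∈ S, ((α k).factorial : ℝ) := by
    intro α hα
    rw [mfact, Finsupp.prod_of_support_subset α hα _ (fun i _ => rfl), Nat.cast_prod]
  have happ : ∀ (p : ℕ →₀ ℕ) (k : ℕ), (θ + κ - 2 • p) k = θ k + κ k - 2 * p k := by
    intro p k
    rw [Finsupp.tsub_apply, Finsupp.add_apply, Finsupp.smul_apply, smul_eq_mul]
  rw [Xi_eq θ hθS, Xi_eq κ hκS, ← Finset.prod_mul_distrib,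
    Finset.prod_congr rfl (fun k _ => Hr_mul (θ k) (κ k) (x k)), Finset.prod_sum]
  refine Finset.sum_nbij'
    (i := fun g => Finsupp.onFinset S (fun k => if h : k ∈ S then g k h else 0)
      (fun k hk => by by_contra hmem; exact hk (dif_neg hmem)))
    (j := fun p k _ => p k) ?_ ?_ ?_ ?_ ?_
  · -- i maps into target
    intro g hg
    simp only [Finset.mem_pi, Finset.mem_range] at hg
    simp only [Finset.mem_filter, Finset.mem_Iic]
    constructor
    · intro k
      simp only [Finsupp.onFinset_apply]
      split_ifs with h
      · have := hg k h; omega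
      · exact Nat.zero_le _
    · intro k
      simp only [Finsupp.onFinset_apply]
      split_ifs with h
      · have := hg k h; omega
      · exact Nat.zero_le _
  · -- j maps into source
    intro p hp
    simp only [Finset.mem_filter, Finset.mem_Iic] at hp
    simp only [Finset.mem_pi, Finset.mem_range]
    intro k hk
    have h1 := hp.1 k
    have h2 := hp.2 k
    omega
  · -- left inverse
    intro g hg
    funext k hk
    exact dif_pos hk
  · -- right inverse
    intro p hp
    simp only [Finset.mem_filter, Finset.mem_Iic] at hp
    ext k
    simp only [Finsupp.onFinset_apply]
    split_ifs with h
    · rfl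
    · have hθ0 : θ k = 0 := by
        by_contra h0
        exact h (hθS (Finsupp.mem_support_iff.mpr h0))
      have := hp.1 k
      omega
  · -- values agree
    intro g hg
    set p : ℕ →₀ ℕ := Finsupp.onFinset S (fun k => if h : k ∈ S then g k h else 0)
      (fun k hk => by by_contra hmem; exact hk (dif_neg hmem)) with hpdef
    have hpk : ∀ (k : ℕ) (hk : k ∈ S), p k = g k hk := fun k hk => dif_pos hk
    have hgp : ∀ (k : { x // x ∈ S }),
        (Real.sqrt (((θ k.1).factorial : ℝ) * ((κ k.1).factorial : ℝ) *
            ((θ k.1 + κ k.1 - 2 * (g k.1 k.2)).factorial : ℝ)) /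
          (((g k.1 k.2).factorial : ℝ) * ((θ k.1 - g k.1 k.2).factorial : ℝ) *
            ((κ k.1 - g k.1 k.2).factorial : ℝ))) * Hr (θ k.1 + κ k.1 - 2 * (g k.1 k.2)) (x k.1)
        = (Real.sqrt (((θ k.1).factorial : ℝ) * ((κ k.1).factorial : ℝ) *
            ((θ k.1 + κ k.1 - 2 * p k.1).factorial : ℝ)) /
          (((p k.1).factorial : ℝ) * ((θ k.1 - p k.1).factorial : ℝ) *
            ((κ k.1 - p k.1).factorial : ℝ))) * Hr (θ k.1 + κ k.1 - 2 * p k.1) (x k.1) := by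
      intro k
      rw [hpk k.1 k.2]
    rw [Finset.prod_congr rfl (fun k _ => hgp k), Finset.prod_attach S
      (fun k => (Real.sqrt (((θ k).factorial : ℝ) * ((κ k).factorial : ℝ) *
            ((θ k + κ k - 2 * p k).factorial : ℝ)) /
          (((p k).factorial : ℝ) * ((θ k - p k).factorial : ℝ) *
            ((κ k - p k).factorial : ℝ))) * Hr (θ k + κ k - 2 * p k) (x k)),
      Finset.prod_mul_distrib]
    -- support facts
    have hpS : p.support ⊆ S := Finsupp.support_onFinset_subset
    have hsum : (θ + κ - 2 • p).support ⊆ S := by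
      refine Finsupp.support_tsub.trans ?_
      exact (Finsupp.support_add).trans (Finset.union_subset hθS hκS)
    have hθp : (θ - p).support ⊆ S := Finsupp.support_tsub.trans hθS
    have hκp : (κ - p).support ⊆ S := Finsupp.support_tsub.trans hκS
    congr 1
    · -- coefficient
      rw [Finset.prod_div_distrib, ← sqrt_prod _ _ (fun i _ => by positivity)]
      rw [mf_eq _ hsum, mf_eq _ hpS, mf_eq _ hθp, mf_eq _ hκp, mf_eq θ hθS, mf_eq κ hκS]
      rw [← Finset.prod_mul_distrib, ← Finset.prod_mul_distrib,
          ← Finset.prod_mul_distrib, ← Finset.prod_mul_distrib]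
      have e1 : ∏ i ∈ S, (((θ i).factorial : ℝ) * ((κ i).factorial : ℝ) *
            ((θ i + κ i - 2 * p i).factorial : ℝ))
          = ∏ i ∈ S, (((θ i).factorial : ℝ) * ((κ i).factorial : ℝ) *
            (((θ + κ - 2 • p) i).factorial : ℝ)) :=
        Finset.prod_congr rfl fun k _ => by rw [happ]
      have e2 : ∏ i ∈ S, (((p i).factorial : ℝ) * ((θ i - p i).factorial : ℝ) *
            ((κ i - p i).factorial : ℝ))
          = ∏ i ∈ S, (((p i).factorial : ℝ) * (((θ - p) i).factorial : ℝ) *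
            (((κ - p) i).factorial : ℝ)) :=
        Finset.prod_congr rfl fun k _ => by rw [Finsupp.tsub_apply, Finsupp.tsub_apply]
      rw [e1, e2]
    · -- Xi part
      rw [Xi_eq _ hsum]
      apply Finset.prod_congr rfl
      intro k _
      rw [happ]
end

section
/- Let E be a real inner product space, let u and v be families of vectors of E indexed by multi-indices, let z : ℕ → ℝ be finitely supported, and let M ∈ ℕ. Then ∑_{|α|=M} (z^α/√(α!))·(v ◊ u)_α = ∑_{K+L=M} ⟨ ∑_{|β|=K} (z^β/√(β!))·u_β , ∑_{|γ|=L} (z^γ/√(γ!))·v_γ ⟩, where all sums range over multi-indices supported in the support of z (hence are finite sums), and the outer sum on the right is over pairs (K,L) of natural numbers with K+L=M. In particular, for M = 0: (v ◊ u)_0 = ⟨u_0, v_0⟩. -/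
open scoped RealInnerProductSpace

/-- The weight `|α| = ∑_k α_k` of a multi-index. -/
def mdeg (α : ℕ →₀ ℕ) : ℕ := α.sum fun _ n => n

/-- `z^α = ∏_k z_k^{α_k}` (a finite product). -/
def mpow (z : ℕ → ℝ) (α : ℕ →₀ ℕ) : ℝ := α.prod fun k n => z k ^ n

/-- The Wick-product coefficient of two families `v, u` of vectors of a real inner
product space indexed by multi-indices:
`(v ◊ u)_α = ∑_{β ≤ α} √(α!/(β!·(α-β)!)) ⟨u_β, v_{α-β}⟩`. -/
noncomputable def wickCoeff {E : Type*} [NormedAddCommGroup E] [InnerProductSpace ℝ E]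
    (v u : (ℕ →₀ ℕ) → E) (α : ℕ →₀ ℕ) : ℝ :=
  ∑ β ∈ Finset.Iic α,
    Real.sqrt ((mfact α : ℝ) / ((mfact β : ℝ) * (mfact (α - β) : ℝ))) * ⟪u β, v (α - β)⟫

/-- The finite set of multi-indices supported in `s` with weight `M`. -/
noncomputable def degSet (s : Finset ℕ) (M : ℕ) : Finset (ℕ →₀ ℕ) :=
  (Finset.Iic (∑ k ∈ s, Finsupp.single k M)).filter fun α => α.support ⊆ s ∧ mdeg α = M

lemma mfact_pos (α : ℕ →₀ ℕ) : (0 : ℝ) < (mfact α : ℝ) := by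
  have : 0 < mfact α := Finset.prod_pos fun k _ => Nat.factorial_pos _
  exact_mod_cast this

lemma sqrt_mfact_pos (α : ℕ →₀ ℕ) : 0 < Real.sqrt (mfact α) :=
  Real.sqrt_pos.mpr (mfact_pos α)

lemma mdeg_add (a b : ℕ →₀ ℕ) : mdeg (a + b) = mdeg a + mdeg b :=
  Finsupp.sum_add_index' (fun _ => rfl) (fun _ _ _ => rfl)

lemma mpow_add (z : ℕ → ℝ) (a b : ℕ →₀ ℕ) : mpow z (a + b) = mpow z a * mpow z b :=
  Finsupp.prod_add_index' (fun _ => pow_zero _) (fun _ _ _ => pow_add _ _ _)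

lemma apply_le_mdeg (α : ℕ →₀ ℕ) (k : ℕ) : α k ≤ mdeg α := by
  by_cases h : k ∈ α.support
  · exact Finset.single_le_sum (f := fun k => α k) (fun _ _ => Nat.zero_le _) h
  · simp [Finsupp.notMem_support_iff.mp h]

lemma support_mono' {a b : ℕ →₀ ℕ} (h : a ≤ b) : a.support ⊆ b.support := by
  intro k hk
  simp only [Finsupp.mem_support_iff] at *
  have := h k; omega

lemma mem_degSet {s : Finset ℕ} {M : ℕ} {α : ℕ →₀ ℕ} :
    α ∈ degSet s M ↔ α.support ⊆ s ∧ mdeg α = M := by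
  unfold degSet
  rw [Finset.mem_filter, and_iff_right_iff_imp]
  rintro ⟨hs, hd⟩
  rw [Finset.mem_Iic]
  refine Finsupp.le_def.mpr fun k => ?_
  have hk : (∑ j ∈ s, Finsupp.single j M) k = if k ∈ s then M else 0 := by
    rw [Finset.sum_apply']
    simp [Finsupp.single_apply, Finset.sum_ite_eq' s k (fun _ => M)]
  rw [hk]
  by_cases h : k ∈ s
  · simpa [h, hd] using apply_le_mdeg α k
  · simp only [h, if_false]
    by_contra hne
    exact h (hs (Finsupp.mem_support_iff.mpr (by omega)))

/-- Action of a Wick product on the test random variables `p_M(z)`: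
`∑_{|α|=M} (z^α/√α!)(v ◊ u)_α = ∑_{K+L=M} ⟨∑_{|β|=K} (z^β/√β!) u_β, ∑_{|γ|=L} (z^γ/√γ!) v_γ⟩`,
all sums over multi-indices supported in the support of `z`; and in particular for `M = 0`,
`(v ◊ u)_0 = ⟨u_0, v_0⟩`. -/
theorem wick_action_on_pM {E : Type*} [NormedAddCommGroup E] [InnerProductSpace ℝ E]
    (u v : (ℕ →₀ ℕ) → E) (z : ℕ →₀ ℝ) (M : ℕ) :
    ((∑ α ∈ degSet z.support M, (mpow z α / Real.sqrt (mfact α)) * wickCoeff v u α)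
      = ∑ KL ∈ Finset.HasAntidiagonal.antidiagonal M,
          ⟪∑ β ∈ degSet z.support KL.1, (mpow z β / Real.sqrt (mfact β)) • u β,
            ∑ γ ∈ degSet z.support KL.2, (mpow z γ / Real.sqrt (mfact γ)) • v γ⟫)
    ∧ wickCoeff v u 0 = ⟪u 0, v 0⟫ := by
  constructor
  · simp only [wickCoeff, Finset.mul_sum, sum_inner, inner_sum, real_inner_smul_left,
      real_inner_smul_right]
    rw [Finset.sum_sigma']
    trans ∑ y ∈ (Finset.HasAntidiagonal.antidiagonal M).sigma
        (fun KL => degSet z.support KL.1 ×ˢ degSet z.support KL.2),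
        mpow z y.2.2 / Real.sqrt (mfact y.2.2) *
          (mpow z y.2.1 / Real.sqrt (mfact y.2.1) * ⟪u y.2.1, v y.2.2⟫)
    swap
    · rw [Finset.sum_sigma]
      refine Finset.sum_congr rfl fun KL _ => ?_
      rw [Finset.sum_product, Finset.sum_comm]
    refine Finset.sum_nbij'
      (fun x => ⟨(mdeg x.2, mdeg (x.1 - x.2)), (x.2, x.1 - x.2)⟩)
      (fun y => ⟨y.2.1 + y.2.2, y.2.1⟩) ?_ ?_ ?_ ?_ ?_
    · rintro ⟨α, β⟩ hx
      simp only [Finset.mem_sigma, Finset.mem_Iic] at hx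
      obtain ⟨hα, hβ⟩ := hx
      obtain ⟨hsup, hdeg⟩ := mem_degSet.mp hα
      have hsum : β + (α - β) = α := add_tsub_cancel_of_le hβ
      simp only [Finset.mem_sigma, Finset.HasAntidiagonal.mem_antidiagonal, Finset.mem_product]
      refine ⟨by rw [← mdeg_add, hsum, hdeg], mem_degSet.mpr ⟨?_, rfl⟩,
        mem_degSet.mpr ⟨?_, rfl⟩⟩
      · exact (support_mono' hβ).trans hsup
      · exact (support_mono' (tsub_le_self)).trans hsup
    · rintro ⟨⟨K, L⟩, β, γ⟩ hy
      simp only [Finset.mem_sigma, Finset.HasAntidiagonal.mem_antidiagonal, Finset.mem_product] at hy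
      obtain ⟨hKL, hβ, hγ⟩ := hy
      obtain ⟨hβs, hβd⟩ := mem_degSet.mp hβ
      obtain ⟨hγs, hγd⟩ := mem_degSet.mp hγ
      simp only [Finset.mem_sigma, Finset.mem_Iic]
      refine ⟨mem_degSet.mpr ⟨?_, by rw [mdeg_add, hβd, hγd, hKL]⟩, le_self_add⟩
      exact (Finsupp.support_add).trans (Finset.union_subset hβs hγs)
    · rintro ⟨α, β⟩ hx
      simp only [Finset.mem_sigma, Finset.mem_Iic] at hx
      simp [add_tsub_cancel_of_le hx.2]
    · rintro ⟨⟨K, L⟩, β, γ⟩ hy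
      simp only [Finset.mem_sigma, Finset.mem_antidiagonal, Finset.mem_product] at hy
      obtain ⟨hKL, hβ, hγ⟩ := hy
      obtain ⟨_, hβd⟩ := mem_degSet.mp hβ
      obtain ⟨_, hγd⟩ := mem_degSet.mp hγ
      simp [add_tsub_cancel_left, hβd, hγd]
    · rintro ⟨α, β⟩ hx
      simp only [Finset.mem_sigma, Finset.mem_Iic] at hx
      obtain ⟨hα, hβ⟩ := hx
      have hα' : mpow z α = mpow z β * mpow z (α - β) := by
        conv_lhs => rw [← add_tsub_cancel_of_le hβ, mpow_add]
      have h1 := (sqrt_mfact_pos α).ne'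
      have h2 := (sqrt_mfact_pos β).ne'
      have h3 := (sqrt_mfact_pos (α - β)).ne'
      simp only
      rw [Real.sqrt_div (mfact_pos α).le, Real.sqrt_mul (mfact_pos β).le, hα']
      field_simp
  · unfold wickCoeff
    rw [show Finset.Iic (0 : ℕ →₀ ℕ) = {0} from by
      ext a; simp [Finsupp.le_iff, Finsupp.ext_iff]]
    simp [mfact]
end

section
/- Let B ≥ 0 and let a : ℕ → ℝ be a sequence of nonnegative reals satisfying a_n ≤ B·∑_{k=1}^{n−1} a_k·a_{n−k} for every n ≥ 2. Then for every n ≥ 1, a_n ≤ C_{n−1}·B^{n−1}·a_1^n. -/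
/-- Catalan-number bound: if `a_n ≤ B·∑_{k=1}^{n-1} a_k a_{n-k}` for all `n ≥ 2`, with
`a ≥ 0` and `B ≥ 0`, then `a_n ≤ C_{n-1}·B^{n-1}·a_1^n` for all `n ≥ 1`, where `C_m` is
the `m`-th Catalan number. -/
theorem catalan_bound (B : ℝ) (hB : 0 ≤ B) (a : ℕ → ℝ) (ha : ∀ n, 0 ≤ a n)
    (hrec : ∀ n, 2 ≤ n → a n ≤ B * ∑ k ∈ Finset.Ico 1 n, a k * a (n - k)) :
    ∀ n, 1 ≤ n → a n ≤ (catalan (n - 1) : ℝ) * B ^ (n - 1) * a 1 ^ n := by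
  intro n
  induction n using Nat.strong_induction_on with
  | _ n ih =>
    intro hn
    match n, hn with
    | 1, _ => simp [catalan_zero]
    | (m+2), _ =>
      have step : ∀ k ∈ Finset.Ico 1 (m+2),
          a k * a (m+2-k) ≤
            ((catalan (k-1) : ℝ) * (catalan (m+2-k-1) : ℝ)) * B^m * a 1 ^ (m+2) := by
        intro k hk
        rw [Finset.mem_Ico] at hk
        obtain ⟨hk1, hk2⟩ := hk
        have h1 := ih k hk2 hk1
        have h2 := ih (m+2-k) (by omega) (by omega)
        have hmul := mul_le_mul h1 h2 (ha _) (mul_nonneg (mul_nonneg (Nat.cast_nonneg _) (pow_nonneg hB _)) (pow_nonneg (ha 1) _))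
        have e1 : (k-1)+(m+2-k-1) = m := by omega
        have e2 : k+(m+2-k) = m+2 := by omega
        calc a k * a (m+2-k) ≤ _ := hmul
          _ = ((catalan (k-1) : ℝ) * (catalan (m+2-k-1) : ℝ))
                * (B^(k-1) * B^(m+2-k-1)) * (a 1 ^ k * a 1 ^ (m+2-k)) := by ring
          _ = _ := by rw [← pow_add, ← pow_add, e1, e2]
      have hsum : (∑ k ∈ Finset.Ico 1 (m+2), (catalan (k-1) : ℝ) * (catalan (m+2-k-1) : ℝ))
          = (catalan (m+1) : ℝ) := by
        rw [Finset.sum_Ico_eq_sum_range]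
        have : ∀ i ∈ Finset.range (m+2-1),
            (catalan (1+i-1) : ℝ) * (catalan (m+2-(1+i)-1) : ℝ)
              = (catalan i : ℝ) * (catalan (m-i) : ℝ) := by
          intro i hi
          rw [show 1+i-1 = i from by omega, show m+2-(1+i)-1 = m-i from by omega]
        rw [Finset.sum_congr rfl this, catalan_succ]
        push_cast
        exact (Fin.sum_univ_eq_sum_range (fun i => (catalan i : ℝ) * (catalan (m-i) : ℝ)) (m+1)).symm
      calc a (m+2) ≤ B * ∑ k ∈ Finset.Ico 1 (m+2), a k * a (m+2-k) := hrec _ (by omega)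
        _ ≤ B * ∑ k ∈ Finset.Ico 1 (m+2),
              ((catalan (k-1) : ℝ) * (catalan (m+2-k-1) : ℝ)) * B^m * a 1 ^ (m+2) := by
            exact mul_le_mul_of_nonneg_left (Finset.sum_le_sum step) hB
        _ = (catalan (m+1) : ℝ) * B^(m+1) * a 1 ^ (m+2) := by
            rw [← Finset.sum_mul, ← Finset.sum_mul, hsum]; ring
        _ = (catalan (m+2-1) : ℝ) * B^(m+2-1) * a 1 ^ (m+2) := rfl
end

section
/- Let B, K ≥ 0 and define, for every multi-index α with |α| ≥ 2, L_α = √(α!)·C_{|α|−1}·(|α|!/α!)·B^{|α|−1}·K^{|α|}. Then there exists q > 1 such that ∑_{α : |α| ≥ 2} (∏_k (2k)^{−2q·α_k})·L_α²/|α|! < ∞, the sum being over all multi-indices of weight at least 2. -/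
/-- Auxiliary: the summand. -/
noncomputable def kterm (q B K : ℝ) (α : ℕ →₀ ℕ) : ℝ :=
  (∏ k ∈ α.support, (2 * (k : ℝ)) ^ (-(2 * q * ((α k : ℕ) : ℝ)))) *
    (Real.sqrt (mfact α) * (catalan (mdeg α - 1) : ℝ) * (Nat.multinomial α.support α : ℝ) *
      B ^ (mdeg α - 1) * K ^ mdeg α) ^ 2 / (Nat.factorial (mdeg α) : ℝ)

lemma catalan_le_four_pow (n : ℕ) : catalan n ≤ 4 ^ n := by
  have h1 : catalan n ≤ n.centralBinom := by
    rw [catalan_eq_centralBinom_div]; exact Nat.div_le_self _ _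
  have h2 : n.centralBinom ≤ 4 ^ n := by
    rw [Nat.centralBinom_eq_two_mul_choose]
    calc (2 * n).choose n ≤ ∑ m ∈ Finset.range (2 * n + 1), (2 * n).choose m :=
          Finset.single_le_sum (fun i _ => Nat.zero_le _) (Finset.mem_range.mpr (by omega))
      _ = 2 ^ (2 * n) := Nat.sum_range_choose _
      _ = 4 ^ n := by rw [pow_mul]; norm_num
  omega

lemma multinomial_subset' {s t : Finset ℕ} (h : s ⊆ t) (f : ℕ → ℕ)
    (hf : ∀ i ∈ t, i ∉ s → f i = 0) : Nat.multinomial s f = Nat.multinomial t f := by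
  unfold Nat.multinomial
  rw [Finset.sum_subset h hf,
    Finset.prod_subset h (fun i hi his => by rw [hf i hi his]; rfl)]

lemma mfact_mul_multinomial (α : ℕ →₀ ℕ) :
    mfact α * Nat.multinomial α.support α = Nat.factorial (mdeg α) := by
  have h2 : mfact α = ∏ i ∈ α.support, (α i).factorial := rfl
  have h3 : mdeg α = ∑ i ∈ α.support, α i := rfl
  rw [h2, h3]
  exact Nat.multinomial_spec _ _

lemma kterm_eq (q B K : ℝ) (α : ℕ →₀ ℕ) :
    kterm q B K α = (catalan (mdeg α - 1) : ℝ) ^ 2 * (B ^ (mdeg α - 1)) ^ 2 *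
      (K ^ mdeg α) ^ 2 * ((Nat.multinomial α.support α : ℝ) *
        ∏ k ∈ α.support, ((2 * (k : ℝ)) ^ (-(2 * q))) ^ (α k)) := by
  unfold kterm
  have h1 : ∏ k ∈ α.support, (2 * (k : ℝ)) ^ (-(2 * q * ((α k : ℕ) : ℝ)))
      = ∏ k ∈ α.support, ((2 * (k : ℝ)) ^ (-(2 * q))) ^ (α k) := by
    refine Finset.prod_congr rfl fun k _ => ?_
    rw [← Real.rpow_natCast ((2 * (k : ℝ)) ^ (-(2 * q))) (α k),
      ← Real.rpow_mul (by positivity)]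
    congr 1; ring
  rw [h1]
  have hm : (mfact α : ℝ) * (Nat.multinomial α.support α : ℝ)
      = (Nat.factorial (mdeg α) : ℝ) := by
    rw [← Nat.cast_mul, mfact_mul_multinomial]
  have hf0 : ((Nat.factorial (mdeg α) : ℝ)) ≠ 0 :=
    Nat.cast_ne_zero.mpr (Nat.factorial_ne_zero _)
  have hs : Real.sqrt (mfact α) ^ 2 = (mfact α : ℝ) := Real.sq_sqrt (by positivity)
  rw [div_eq_iff hf0, mul_pow, mul_pow, mul_pow, mul_pow, hs]
  set P := ∏ k ∈ α.support, ((2 * (k : ℝ)) ^ (-(2 * q))) ^ (α k)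
  set Mu := (Nat.multinomial α.support α : ℝ)
  set C := (catalan (mdeg α - 1) : ℝ)
  set Bp := B ^ (mdeg α - 1)
  set Kp := K ^ mdeg α
  linear_combination (P * C ^ 2 * Mu * Bp ^ 2 * Kp ^ 2) * hm

lemma multinomial_sum_le (x : ℕ → ℝ) (hx : ∀ k, 0 ≤ x k) (T : Finset ℕ) (m : ℕ)
    (V : Finset (ℕ →₀ ℕ)) (hV : ∀ α ∈ V, α.support ⊆ T ∧ mdeg α = m) :
    ∑ α ∈ V, ((Nat.multinomial α.support α : ℝ) * ∏ k ∈ α.support, (x k) ^ (α k))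
      ≤ (∑ k ∈ T, x k) ^ m := by
  classical
  rw [Finset.sum_pow_eq_sum_piAntidiag]
  have hsub : V.image (fun α : ℕ →₀ ℕ => (α : ℕ → ℕ)) ⊆ Finset.piAntidiag T m := by
    intro g hg
    simp only [Finset.mem_image] at hg
    obtain ⟨α, hα, rfl⟩ := hg
    obtain ⟨hs, hm⟩ := hV α hα
    refine Finset.mem_piAntidiag.mpr ⟨?_, fun i hi => hs (Finsupp.mem_support_iff.mpr hi)⟩
    rw [← hm]
    have h3 : mdeg α = ∑ i ∈ α.support, α i := rfl
    rw [h3]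
    exact (Finset.sum_subset hs (fun i _ hi => Finsupp.notMem_support_iff.mp hi)).symm
  calc ∑ α ∈ V, ((Nat.multinomial α.support ⇑α : ℝ) * ∏ k ∈ α.support, x k ^ α k)
      = ∑ α ∈ V, ((Nat.multinomial T ⇑α : ℝ) * ∏ k ∈ T, x k ^ α k) := by
        refine Finset.sum_congr rfl fun α hα => ?_
        obtain ⟨hs, _⟩ := hV α hα
        rw [multinomial_subset' hs _ (fun i _ hi => Finsupp.notMem_support_iff.mp hi),
          Finset.prod_subset hs
            (fun i _ hi => by rw [Finsupp.notMem_support_iff.mp hi, pow_zero])]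
    _ = ∑ g ∈ V.image (fun α : ℕ →₀ ℕ => (α : ℕ → ℕ)), ((Nat.multinomial T g : ℝ) * ∏ k ∈ T, x k ^ g k) := by
        rw [Finset.sum_image (fun a _ b _ h => DFunLike.coe_injective h)]
    _ ≤ ∑ g ∈ Finset.piAntidiag T m, ((Nat.multinomial T g : ℝ) * ∏ k ∈ T, x k ^ g k) := by
        refine Finset.sum_le_sum_of_subset_of_nonneg hsub (fun g _ _ => ?_)
        have : (0:ℝ) ≤ ∏ k ∈ T, x k ^ g k :=
          Finset.prod_nonneg fun k _ => pow_nonneg (hx k) _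
        positivity

lemma geom_icc_le {r : ℝ} (h0 : 0 ≤ r) (h1 : r < 1) (M : ℕ) :
    ∑ m ∈ Finset.Icc 2 M, r ^ (m - 1) ≤ (1 - r)⁻¹ := by
  calc ∑ m ∈ Finset.Icc 2 M, r ^ (m - 1)
      = ∑ j ∈ (Finset.Icc 2 M).image (fun m => m - 1), r ^ j :=
        (Finset.sum_image (by
          intro a ha b hb hab
          simp only [Finset.mem_coe, Finset.mem_Icc] at ha hb hab
          omega)).symm
    _ ≤ ∑' j : ℕ, r ^ j :=
        Summable.sum_le_tsum _ (fun j _ => pow_nonneg h0 j) (summable_geometric_of_lt_one h0 h1)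
    _ = (1 - r)⁻¹ := tsum_geometric_of_lt_one h0 h1

/-- For `L_α = √(α!)·C_{|α|-1}·(|α|!/α!)·B^{|α|-1}·K^{|α|}` there is an exponent `q > 1`
such that `∑_{|α| ≥ 2} (∏_k (2k)^{-2q·α_k})·L_α²/|α|! < ∞`. -/
theorem kondratiev_weight_summable (B K : ℝ) (hB : 0 ≤ B) (hK : 0 ≤ K) :
    ∃ q : ℝ, 1 < q ∧
      Summable (fun α : {α : ℕ →₀ ℕ // 2 ≤ mdeg α} =>
        (∏ k ∈ (α : ℕ →₀ ℕ).support,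
            (2 * (k : ℝ)) ^ (-(2 * q * (((α : ℕ →₀ ℕ) k : ℕ) : ℝ)))) *
          (Real.sqrt (mfact (α : ℕ →₀ ℕ)) * (catalan (mdeg (α : ℕ →₀ ℕ) - 1) : ℝ) *
              (Nat.multinomial (α : ℕ →₀ ℕ).support (α : ℕ →₀ ℕ) : ℝ) *
              B ^ (mdeg (α : ℕ →₀ ℕ) - 1) * K ^ mdeg (α : ℕ →₀ ℕ)) ^ 2 /
          (Nat.factorial (mdeg (α : ℕ →₀ ℕ)) : ℝ)) := by
  classical
  set c : ℝ := ∑' k : ℕ, (((k : ℝ)) ^ 2)⁻¹ with hc_def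
  have hc_sum : Summable (fun k : ℕ => (((k : ℝ)) ^ 2)⁻¹) :=
    Real.summable_nat_pow_inv.mpr one_lt_two
  have hc0 : 0 ≤ c := tsum_nonneg (fun k => by positivity)
  set q : ℝ := max 2 (Real.logb 4 (16 * B ^ 2 * K ^ 2 * c + 1) + 1) with hq_def
  have hq2 : (2 : ℝ) ≤ q := le_max_left _ _
  have hq1 : (1 : ℝ) < q := lt_of_lt_of_le one_lt_two hq2
  have hq0 : (0 : ℝ) < q := by linarith
  refine ⟨q, hq1, ?_⟩
  have hkey : 16 * B ^ 2 * K ^ 2 * c < (4 : ℝ) ^ q := by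
    have hx : (0 : ℝ) < 16 * B ^ 2 * K ^ 2 * c + 1 := by positivity
    have h1 : (4 : ℝ) ^ (Real.logb 4 (16 * B ^ 2 * K ^ 2 * c + 1) + 1) ≤ (4 : ℝ) ^ q :=
      Real.rpow_le_rpow_of_exponent_le (by norm_num) (le_max_right _ _)
    have h2 : (4 : ℝ) ^ (Real.logb 4 (16 * B ^ 2 * K ^ 2 * c + 1) + 1)
        = (16 * B ^ 2 * K ^ 2 * c + 1) * 4 := by
      rw [Real.rpow_add (by norm_num), Real.rpow_logb (by norm_num) (by norm_num) hx,
        Real.rpow_one]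
    have hX : (0 : ℝ) ≤ 16 * B ^ 2 * K ^ 2 * c := by positivity
    nlinarith
  set S : ℝ := (4 : ℝ) ^ (-q) * c with hS_def
  have hS0 : 0 ≤ S := mul_nonneg (Real.rpow_nonneg (by norm_num) _) hc0
  set r : ℝ := 16 * B ^ 2 * K ^ 2 * S with hr_def
  have hr0 : 0 ≤ r := by positivity
  have hr1 : r < 1 := by
    have h4 : (0 : ℝ) < (4 : ℝ) ^ q := Real.rpow_pos_of_pos (by norm_num) q
    have heq : r = (16 * B ^ 2 * K ^ 2 * c) / (4 : ℝ) ^ q := by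
      rw [hr_def, hS_def, Real.rpow_neg (by norm_num)]
      field_simp
    rw [heq]
    exact (div_lt_one h4).mpr hkey
  -- pointwise bound on the weights
  have h22 : (2 : ℝ) ^ (2 : ℝ) = 4 := by
    rw [show (2 : ℝ) = ((2 : ℕ) : ℝ) by norm_num, Real.rpow_natCast]
    norm_num
  have hxle : ∀ k : ℕ, k ≠ 0 →
      (2 * (k : ℝ)) ^ (-(2 * q)) ≤ (4 : ℝ) ^ (-q) * (((k : ℝ)) ^ 2)⁻¹ := by
    intro k hk
    have hk1 : (1 : ℝ) ≤ (k : ℝ) := by exact_mod_cast Nat.one_le_iff_ne_zero.mpr hk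
    have hk0 : (0 : ℝ) < (k : ℝ) := by linarith
    have hsplit : (2 * (k : ℝ)) ^ (-(2 * q)) = (2 : ℝ) ^ (-(2 * q)) * (k : ℝ) ^ (-(2 * q)) :=
      Real.mul_rpow (by norm_num) hk0.le
    have h2 : (2 : ℝ) ^ (-(2 * q)) = (4 : ℝ) ^ (-q) := by
      rw [← h22, ← Real.rpow_mul (by norm_num : (0:ℝ) ≤ 2)]
      congr 1; ring
    have h3 : (k : ℝ) ^ (-(2 * q)) ≤ (k : ℝ) ^ (-(2 : ℝ)) :=
      Real.rpow_le_rpow_of_exponent_le hk1 (by linarith)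
    have h4 : (k : ℝ) ^ (-(2 : ℝ)) = (((k : ℝ)) ^ 2)⁻¹ := by
      rw [Real.rpow_neg hk0.le, show (2 : ℝ) = ((2 : ℕ) : ℝ) by norm_num,
        Real.rpow_natCast]
    rw [hsplit, h2]
    exact mul_le_mul_of_nonneg_left (h3.trans_eq h4) (Real.rpow_nonneg (by norm_num) _)
  have hsumx : ∀ T : Finset ℕ, 0 ∉ T → ∑ k ∈ T, (2 * (k : ℝ)) ^ (-(2 * q)) ≤ S := by
    intro T hT
    calc ∑ k ∈ T, (2 * (k : ℝ)) ^ (-(2 * q))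
        ≤ ∑ k ∈ T, (4 : ℝ) ^ (-q) * (((k : ℝ)) ^ 2)⁻¹ :=
          Finset.sum_le_sum (fun k hk => hxle k (fun h => hT (h ▸ hk)))
      _ = (4 : ℝ) ^ (-q) * ∑ k ∈ T, (((k : ℝ)) ^ 2)⁻¹ := by rw [Finset.mul_sum]
      _ ≤ (4 : ℝ) ^ (-q) * c :=
          mul_le_mul_of_nonneg_left
            (Summable.sum_le_tsum T (fun k _ => by positivity) hc_sum)
            (Real.rpow_nonneg (by norm_num) _)
      _ = S := rfl
  -- summability via uniformly bounded partial sums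
  have main : Summable (fun α : {α : ℕ →₀ ℕ // 2 ≤ mdeg α} => kterm q B K ↑α) := by
    refine summable_of_sum_le (c := K ^ 2 * S * (1 - r)⁻¹) (fun α => ?_) (fun U => ?_)
    · unfold kterm
      positivity
    · set T := U.sup (fun α => ((α : ℕ →₀ ℕ)).support.erase 0) with hT
      have h0T : (0 : ℕ) ∉ T := by
        rw [hT]
        simp only [Finset.mem_sup]
        rintro ⟨i, hi, h0⟩
        exact (Finset.notMem_erase 0 _) h0
      set M := U.sup (fun α => mdeg (α : ℕ →₀ ℕ)) with hM
      have hST0 : 0 ≤ ∑ k ∈ T, (2 * (k : ℝ)) ^ (-(2 * q)) :=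
        Finset.sum_nonneg fun k _ => Real.rpow_nonneg (by positivity) _
      have hSTle : ∑ k ∈ T, (2 * (k : ℝ)) ^ (-(2 * q)) ≤ S := hsumx T h0T
      have hfiber : ∀ m ∈ Finset.Icc 2 M,
          ∑ α ∈ U.filter (fun α => mdeg α.1 = m), kterm q B K ↑α
            ≤ K ^ 2 * S * r ^ (m - 1) := by
        intro m hm
        rw [Finset.mem_Icc] at hm
        obtain ⟨hm2, hmM⟩ := hm
        set V : Finset {α : ℕ →₀ ℕ // 2 ≤ mdeg α} := (U.filter (fun α => mdeg α.1 = m)).filter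
          (fun α => α.1 0 = 0) with hV
        have hVmdeg : ∀ α ∈ V, mdeg (α : ℕ →₀ ℕ) = m := by
          intro α hα
          rw [hV] at hα
          exact (Finset.mem_filter.mp (Finset.mem_filter.mp hα).1).2
        have hVsupp : ∀ α ∈ V, (α : ℕ →₀ ℕ).support ⊆ T := by
          intro α hα k hk
          rw [hV] at hα
          have h0 : (α : ℕ →₀ ℕ) 0 = 0 := (Finset.mem_filter.mp hα).2
          have hαU : α ∈ U :=
            Finset.filter_subset _ _ ((Finset.mem_filter.mp hα).1)
          have hk0 : k ≠ 0 := by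
            intro h; rw [h] at hk
            exact (Finsupp.mem_support_iff.mp hk) h0
          have hmem : k ∈ (α : ℕ →₀ ℕ).support.erase 0 :=
            Finset.mem_erase.mpr ⟨hk0, hk⟩
          rw [hT]
          exact Finset.mem_sup.mpr ⟨α, hαU, hmem⟩
        have hsum0 : ∑ α ∈ U.filter (fun α => mdeg α.1 = m), kterm q B K ↑α
            = ∑ α ∈ V, kterm q B K ↑α := by
          refine (Finset.sum_subset (Finset.filter_subset _ _) ?_).symm
          intro α hα hα'
          have h00 : (α : ℕ →₀ ℕ) 0 ≠ 0 := by
            intro h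
            exact hα' (Finset.mem_filter.mpr ⟨hα, h⟩)
          unfold kterm
          rw [Finset.prod_eq_zero (Finsupp.mem_support_iff.mpr h00)
            (by
              show (2 * ((0 : ℕ) : ℝ)) ^ (-(2 * q * (((α : ℕ →₀ ℕ) 0 : ℕ) : ℝ))) = 0
              rw [show (2 * ((0 : ℕ) : ℝ)) = 0 by norm_num]
              apply Real.zero_rpow
              have h1 : (1 : ℝ) ≤ (((α : ℕ →₀ ℕ) 0 : ℕ) : ℝ) := by
                exact_mod_cast Nat.one_le_iff_ne_zero.mpr h00
              have : 0 < 2 * q * (((α : ℕ →₀ ℕ) 0 : ℕ) : ℝ) := by nlinarith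
              intro hcontra
              nlinarith)]
          simp
        rw [hsum0]
        have hsum2 : ∑ α ∈ V, kterm q B K ↑α
            = (catalan (m - 1) : ℝ) ^ 2 * (B ^ (m - 1)) ^ 2 * (K ^ m) ^ 2 *
              ∑ α ∈ V, ((Nat.multinomial (α : ℕ →₀ ℕ).support (α : ℕ →₀ ℕ) : ℝ) *
                ∏ k ∈ (α : ℕ →₀ ℕ).support, ((2 * (k : ℝ)) ^ (-(2 * q))) ^ ((α : ℕ →₀ ℕ) k)) := by
          rw [Finset.mul_sum]
          refine Finset.sum_congr rfl fun α hα => ?_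
          rw [kterm_eq, hVmdeg α hα]
        rw [hsum2]
        -- multinomial theorem bound
        have himg : ∑ β ∈ V.image (fun α : {α : ℕ →₀ ℕ // 2 ≤ mdeg α} => α.1),
              ((Nat.multinomial β.support β : ℝ) *
                ∏ k ∈ β.support, ((2 * (k : ℝ)) ^ (-(2 * q))) ^ (β k))
            = ∑ α ∈ V, ((Nat.multinomial (α : ℕ →₀ ℕ).support (α : ℕ →₀ ℕ) : ℝ) *
              ∏ k ∈ (α : ℕ →₀ ℕ).support, ((2 * (k : ℝ)) ^ (-(2 * q))) ^ ((α : ℕ →₀ ℕ) k)) :=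
          Finset.sum_image (fun a _ b _ h => Subtype.ext h)
        have hVimg : ∀ β ∈ V.image (fun α : {α : ℕ →₀ ℕ // 2 ≤ mdeg α} => α.1),
            β.support ⊆ T ∧ mdeg β = m := by
          intro β hβ
          simp only [Finset.mem_image] at hβ
          obtain ⟨α, hα, rfl⟩ := hβ
          exact ⟨hVsupp α hα, hVmdeg α hα⟩
        have hms := multinomial_sum_le (fun k => (2 * (k : ℝ)) ^ (-(2 * q)))
          (fun k => Real.rpow_nonneg (by positivity) _) T m
          (V.image (fun α : {α : ℕ →₀ ℕ // 2 ≤ mdeg α} => α.1)) hVimg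
        have hbound : ∑ α ∈ V, ((Nat.multinomial (α : ℕ →₀ ℕ).support (α : ℕ →₀ ℕ) : ℝ) *
              ∏ k ∈ (α : ℕ →₀ ℕ).support, ((2 * (k : ℝ)) ^ (-(2 * q))) ^ ((α : ℕ →₀ ℕ) k))
            ≤ S ^ m := by
          rw [← himg]
          exact hms.trans (pow_le_pow_left₀ hST0 hSTle m)
        have hcat : ((catalan (m - 1) : ℕ) : ℝ) ≤ (4 : ℝ) ^ (m - 1) := by
          exact_mod_cast catalan_le_four_pow (m - 1)
        have hsum_nonneg : (0:ℝ) ≤ ∑ α ∈ V,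
            ((Nat.multinomial (α : ℕ →₀ ℕ).support (α : ℕ →₀ ℕ) : ℝ) *
              ∏ k ∈ (α : ℕ →₀ ℕ).support, ((2 * (k : ℝ)) ^ (-(2 * q))) ^ ((α : ℕ →₀ ℕ) k)) := by
          refine Finset.sum_nonneg fun α _ => mul_nonneg (by positivity) ?_
          exact Finset.prod_nonneg fun k _ =>
            pow_nonneg (Real.rpow_nonneg (by positivity) _) _
        calc (catalan (m - 1) : ℝ) ^ 2 * (B ^ (m - 1)) ^ 2 * (K ^ m) ^ 2 *
              ∑ α ∈ V, ((Nat.multinomial (α : ℕ →₀ ℕ).support (α : ℕ →₀ ℕ) : ℝ) *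
                ∏ k ∈ (α : ℕ →₀ ℕ).support, ((2 * (k : ℝ)) ^ (-(2 * q))) ^ ((α : ℕ →₀ ℕ) k))
            ≤ ((4 : ℝ) ^ (m - 1)) ^ 2 * (B ^ (m - 1)) ^ 2 * (K ^ m) ^ 2 * S ^ m := by
              have hc2 : (catalan (m - 1) : ℝ) ^ 2 ≤ ((4 : ℝ) ^ (m - 1)) ^ 2 :=
                pow_le_pow_left₀ (by positivity) hcat 2
              have hrest : (0:ℝ) ≤ (B ^ (m - 1)) ^ 2 * (K ^ m) ^ 2 := by positivity
              calc (catalan (m - 1) : ℝ) ^ 2 * (B ^ (m - 1)) ^ 2 * (K ^ m) ^ 2 *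
                    (∑ α ∈ V, ((Nat.multinomial (α : ℕ →₀ ℕ).support (α : ℕ →₀ ℕ) : ℝ) *
                      ∏ k ∈ (α : ℕ →₀ ℕ).support,
                        ((2 * (k : ℝ)) ^ (-(2 * q))) ^ ((α : ℕ →₀ ℕ) k)))
                  ≤ (catalan (m - 1) : ℝ) ^ 2 * (B ^ (m - 1)) ^ 2 * (K ^ m) ^ 2 * S ^ m := by
                    have h0 : (0:ℝ) ≤ (catalan (m - 1) : ℝ) ^ 2 * (B ^ (m - 1)) ^ 2 *
                      (K ^ m) ^ 2 := by positivity
                    exact mul_le_mul_of_nonneg_left hbound h0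
                _ ≤ ((4 : ℝ) ^ (m - 1)) ^ 2 * (B ^ (m - 1)) ^ 2 * (K ^ m) ^ 2 * S ^ m := by
                    have hSm : (0:ℝ) ≤ S ^ m := by positivity
                    have := mul_le_mul_of_nonneg_right
                      (mul_le_mul_of_nonneg_right
                        (mul_le_mul_of_nonneg_right hc2 (by positivity : (0:ℝ) ≤ (B ^ (m-1))^2))
                        (by positivity : (0:ℝ) ≤ (K ^ m)^2)) hSm
                    exact this
          _ = K ^ 2 * S * r ^ (m - 1) := by
              obtain ⟨j, rfl⟩ := Nat.exists_eq_add_of_le hm2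
              have hsub : 2 + j - 1 = j + 1 := by omega
              rw [hsub, hr_def]
              have h16 : ((4 : ℝ) ^ (j + 1)) ^ 2 = 16 ^ (j + 1) := by
                rw [← pow_mul, mul_comm, pow_mul]
                norm_num
              rw [h16]
              ring
      calc ∑ α ∈ U, kterm q B K ↑α
          = ∑ m ∈ Finset.Icc 2 M,
              ∑ α ∈ U.filter (fun α => mdeg α.1 = m), kterm q B K ↑α :=
            (Finset.sum_fiberwise_of_maps_to
              (fun α hα => Finset.mem_Icc.mpr ⟨α.2, Finset.le_sup hα⟩) _).symm
        _ ≤ ∑ m ∈ Finset.Icc 2 M, K ^ 2 * S * r ^ (m - 1) := Finset.sum_le_sum hfiber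
        _ = K ^ 2 * S * ∑ m ∈ Finset.Icc 2 M, r ^ (m - 1) := by rw [Finset.mul_sum]
        _ ≤ K ^ 2 * S * (1 - r)⁻¹ :=
            mul_le_mul_of_nonneg_left (geom_icc_le hr0 hr1 M) (by positivity)
  exact main
end

section
/- For every real q > 1, the family α ↦ ∏_k (2k)^{−q·α_k}, indexed by all multi-indices α, is summable: ∑'_{α} ∏_k (2k)^{−q·α_k} < ∞. -/
set_option maxHeartbeats 1000000


/-- For every `q > 1`, the Kondratiev weights `(2ℕ)^{-qα} = ∏_k (2k)^{-q·α_k}`, indexed by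
all multi-indices `α : ℕ →₀ ℕ`, form a summable family. -/
theorem kondratiev_weights_summable (q : ℝ) (hq : 1 < q) :
    Summable (fun α : ℕ →₀ ℕ =>
      ∏ k ∈ α.support, (2 * (k : ℝ)) ^ (-(q * ((α k : ℕ) : ℝ)))) := by
  classical
  have hq0 : (0:ℝ) < q := by linarith
  set f : ℕ → ℝ := fun k => (2 * (k : ℝ)) ^ (-q) with hfdef
  have hfnonneg : ∀ k, 0 ≤ f k := fun k => Real.rpow_nonneg (by positivity) _
  have hfhalf : ∀ k, f k ≤ 1/2 := by
    intro k
    match k with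
    | 0 => simp [hfdef, Real.zero_rpow (by linarith : -q ≠ 0)]
    | (n+1) =>
      have h2 : (1:ℝ) ≤ 2 * ((n+1 : ℕ):ℝ) := by push_cast; linarith
      calc f (n+1) ≤ (2 * (((n+1:ℕ)):ℝ)) ^ (-1 : ℝ) :=
            Real.rpow_le_rpow_of_exponent_le h2 (by linarith)
        _ = (2 * (((n+1:ℕ)):ℝ))⁻¹ := Real.rpow_neg_one _
        _ ≤ 1/2 := by
            rw [one_div]
            apply inv_anti₀ (by norm_num)
            push_cast; linarith
  have hflt1 : ∀ k, f k < 1 := fun k => lt_of_le_of_lt (hfhalf k) (by norm_num)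
  have hfsum : Summable f := by
    refine Summable.of_nonneg_of_le hfnonneg (fun k => ?_)
      (Real.summable_nat_rpow.mpr (by linarith : -q < -1))
    · 
      match k with
      | 0 => simp [hfdef, Real.zero_rpow (by linarith : -q ≠ 0)]
      | (n+1) =>
        have hx : (0:ℝ) < ((n+1:ℕ):ℝ) := by push_cast; linarith
        show (2 * (((n+1):ℕ):ℝ)) ^ (-q) ≤ (((n+1):ℕ):ℝ) ^ (-q)
        rw [Real.rpow_neg (by positivity), Real.rpow_neg (by positivity)]
        apply inv_anti₀ (Real.rpow_pos_of_pos hx q)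
        exact Real.rpow_le_rpow (le_of_lt hx) (by linarith) (le_of_lt hq0)
  set T : ℝ := ∑' k, f k with hT
  -- bound for geometric sums: for every k and m, ∑_{j<m} (f k)^j ≤ exp (2 * f k)
  have hgeom : ∀ (k m : ℕ), (∑ j ∈ Finset.range m, f k ^ j) ≤ Real.exp (2 * f k) := by
    intro k m
    have hsum : Summable (fun j : ℕ => f k ^ j) :=
      summable_geometric_of_lt_one (hfnonneg k) (hflt1 k)
    have h1 : (∑ j ∈ Finset.range m, f k ^ j) ≤ (1 - f k)⁻¹ := by
      calc (∑ j ∈ Finset.range m, f k ^ j) ≤ ∑' j : ℕ, f k ^ j :=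
            Summable.sum_le_tsum _ (fun j _ => pow_nonneg (hfnonneg k) j) hsum
        _ = (1 - f k)⁻¹ := tsum_geometric_of_lt_one (hfnonneg k) (hflt1 k)
    have h2 : (1 - f k)⁻¹ ≤ 1 + 2 * f k := by
      rw [inv_le_iff_one_le_mul₀ (by have := hfhalf k; linarith)]
      have := hfnonneg k; have := hfhalf k
      nlinarith
    have h3 : 1 + 2 * f k ≤ Real.exp (2 * f k) := by
      have := Real.add_one_le_exp (2 * f k); linarith
    linarith
  -- rewrite the summand
  have hterm : ∀ α : ℕ →₀ ℕ,
      (∏ k ∈ α.support, (2 * (k : ℝ)) ^ (-(q * ((α k : ℕ) : ℝ))))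
        = ∏ k ∈ α.support, f k ^ (α k) := by
    intro α
    refine Finset.prod_congr rfl fun k _ => ?_
    rw [hfdef]
    rw [← Real.rpow_natCast ((2 * (k:ℝ)) ^ (-q)) (α k),
        ← Real.rpow_mul (by positivity)]
    ring_nf
  -- the main bound on finite partial sums
  apply summable_of_sum_le (c := Real.exp (2 * T))
  · intro α
    exact Finset.prod_nonneg fun k _ => Real.rpow_nonneg (by positivity) _
  · intro S
    set N : ℕ := S.sup (fun α => α.support.sup id) + 1 with hN
    set M : ℕ := S.sup (fun α => α.support.sup (fun k => α k)) + 1 with hM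
    have hsupp : ∀ α ∈ S, α.support ⊆ Finset.range N := by
      intro α hα k hk
      rw [Finset.mem_range]
      have h1 : α.support.sup id ≤ S.sup (fun α => α.support.sup id) :=
        Finset.le_sup (f := fun α => α.support.sup id) hα
      have h2 : id k ≤ α.support.sup id := Finset.le_sup (f := id) hk
      simp only [id] at h2
      omega
    have hval : ∀ α ∈ S, ∀ k, α k < M := by
      intro α hα k
      by_cases hk : k ∈ α.support
      · have h1 : α.support.sup (fun k => α k) ≤
            S.sup (fun α => α.support.sup (fun k => α k)) :=
          Finset.le_sup (f := fun α => α.support.sup (fun k => α k)) hα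
        have h2 : α k ≤ α.support.sup (fun k => α k) :=
          Finset.le_sup (f := fun k => α k) hk
        omega
      · rw [Finsupp.notMem_support_iff.mp hk]; omega
    have hterm2 : ∀ α ∈ S,
        (∏ k ∈ α.support, f k ^ (α k)) = ∏ k ∈ Finset.range N, f k ^ (α k) := by
      intro α hα
      refine Finset.prod_subset (hsupp α hα) fun k _ hk => ?_
      rw [Finsupp.notMem_support_iff.mp hk, pow_zero]
    -- injection into the pi-set
    set ι : (ℕ →₀ ℕ) → (∀ k ∈ Finset.range N, ℕ) :=
      fun α k _ => α k with hι
    have hinj : Set.InjOn ι S := by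
      intro α hα β hβ h
      ext k
      by_cases hk : k ∈ Finset.range N
      · exact congrFun (congrFun h k) hk
      · rw [Finsupp.notMem_support_iff.mp fun hc => hk (hsupp α hα hc),
            Finsupp.notMem_support_iff.mp fun hc => hk (hsupp β hβ hc)]
    have himg : S.image ι ⊆ (Finset.range N).pi (fun _ => Finset.range M) := by
      intro p hp
      rw [Finset.mem_image] at hp
      obtain ⟨α, hα, rfl⟩ := hp
      rw [Finset.mem_pi]
      intro k hk
      rw [Finset.mem_range]
      exact hval α hα k
    calc ∑ α ∈ S, ∏ k ∈ α.support, (2 * (k : ℝ)) ^ (-(q * ((α k : ℕ) : ℝ)))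
        = ∑ α ∈ S, ∏ k ∈ Finset.range N, f k ^ (α k) := by
          refine Finset.sum_congr rfl fun α hα => ?_
          rw [hterm α, hterm2 α hα]
      _ = ∑ α ∈ S, ∏ k ∈ (Finset.range N).attach, f k.1 ^ (ι α k.1 k.2) := by
          refine Finset.sum_congr rfl fun α hα => ?_
          rw [← Finset.prod_attach (Finset.range N) (fun k => f k ^ (α k))]
      _ = ∑ p ∈ S.image ι, ∏ k ∈ (Finset.range N).attach, f k.1 ^ (p k.1 k.2) :=
          (Finset.sum_image
            (f := fun p : ∀ k ∈ Finset.range N, ℕ =>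
              ∏ k ∈ (Finset.range N).attach, f k.1 ^ (p k.1 k.2))
            (fun α hα β hβ h => hinj hα hβ h)).symm
      _ ≤ ∑ p ∈ (Finset.range N).pi (fun _ => Finset.range M),
            ∏ k ∈ (Finset.range N).attach, f k.1 ^ (p k.1 k.2) := by
          refine Finset.sum_le_sum_of_subset_of_nonneg himg fun p _ _ => ?_
          exact Finset.prod_nonneg fun k _ => pow_nonneg (hfnonneg k.1) _
      _ = ∏ k ∈ Finset.range N, ∑ j ∈ Finset.range M, f k ^ j :=
          (Finset.prod_sum (Finset.range N) (fun _ => Finset.range M)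
            (fun k j => f k ^ j)).symm
      _ ≤ ∏ k ∈ Finset.range N, Real.exp (2 * f k) := by
          refine Finset.prod_le_prod (fun k _ => ?_) (fun k _ => hgeom k M)
          exact Finset.sum_nonneg fun j _ => pow_nonneg (hfnonneg k) j
      _ = Real.exp (∑ k ∈ Finset.range N, 2 * f k) := (Real.exp_sum _ _).symm
      _ ≤ Real.exp (2 * T) := by
          apply Real.exp_le_exp.mpr
          rw [← Finset.mul_sum]
          have : (∑ k ∈ Finset.range N, f k) ≤ T :=
            Summable.sum_le_tsum _ (fun k _ => hfnonneg k) hfsum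
          linarith
end

section
/- For all real numbers x and t, the series ∑_{n=0}^∞ He_n(x)·tⁿ/n! converges absolutely and its sum equals exp(x·t − t²/2). -/
open Polynomial Nat

private lemma factTwoMul (k : ℕ) : (2 * k)! = 2 ^ k * k ! * (2 * k - 1)‼ := by
  cases k with
  | zero => simp
  | succ k =>
    have h : 2 * (k + 1) = (2 * k + 1) + 1 := by ring
    rw [h, Nat.factorial_eq_mul_doubleFactorial]
    rw [show 2 * k + 1 + 1 = 2 * (k + 1) by ring, Nat.doubleFactorial_two_mul]
    rw [show 2 * (k + 1) - 1 = 2 * k + 1 by omega]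

/-- the reindexing equivalence `(m, k) ↦ ⟨m + 2k, k⟩`. -/
private def E : (ℕ × ℕ) ≃ (Σ n : ℕ, Fin (n / 2 + 1)) where
  toFun p := ⟨p.1 + 2 * p.2, ⟨p.2, by omega⟩⟩
  invFun q := (q.1 - 2 * (q.2 : ℕ), (q.2 : ℕ))
  left_inv p := by simp
  right_inv q := by
    obtain ⟨n, k, hk⟩ := q
    have h2 : 2 * (k : ℕ) ≤ n := by omega
    refine Sigma.ext (by simp; omega) ((Fin.heq_ext_iff (by simp; omega)).mpr ?_)
    simp

set_option maxHeartbeats 1000000 in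
/-- Generating function of the probabilists' Hermite polynomials: for all real `x, t`,
the series `∑_n He_n(x)·tⁿ/n!` converges absolutely with sum `exp(x·t - t^2/2)`. -/
theorem hermite_generating_function (x t : ℝ) :
    (Summable fun n : ℕ =>
        |Polynomial.aeval x (Polynomial.hermite n) * t ^ n / (Nat.factorial n : ℝ)|)
    ∧ HasSum
        (fun n : ℕ => Polynomial.aeval x (Polynomial.hermite n) * t ^ n / (Nat.factorial n : ℝ))
        (Real.exp (x * t - t ^ 2 / 2)) := by
  set f : ℕ × ℕ → ℝ := fun p => ((x * t) ^ p.1 / p.1 !) * ((-(t ^ 2 / 2)) ^ p.2 / p.2 !) with hfdef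
  -- key combinatorial identity
  have hkey : ∀ n : ℕ, (∑ k : Fin (n / 2 + 1), f (n - 2 * (k : ℕ), (k : ℕ)))
      = Polynomial.aeval x (Polynomial.hermite n) * t ^ n / (n ! : ℝ) := by
    intro n
    have haev : Polynomial.aeval x (Polynomial.hermite n)
        = ∑ i ∈ Finset.range (n + 1), ((Polynomial.hermite n).coeff i : ℝ) * x ^ i := by
      rw [Polynomial.aeval_eq_sum_range' (n := n + 1) (by simp)]
      refine Finset.sum_congr rfl fun i _ => ?_
      rw [zsmul_eq_mul]
    rw [haev, Finset.sum_mul, Finset.sum_div]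
    set g : ℕ → ℝ := fun i => ((Polynomial.hermite n).coeff i : ℝ) * x ^ i * t ^ n / (n ! : ℝ)
      with hgdef
    have hfilter : ∑ i ∈ (Finset.range (n + 1)).filter (fun i => Even (n + i)), g i
        = ∑ i ∈ Finset.range (n + 1), g i := by
      apply Finset.sum_filter_of_ne
      intro i _ hne
      by_contra hodd
      apply hne
      rw [hgdef]
      simp [Polynomial.coeff_hermite_of_odd_add (Nat.not_even_iff_odd.1 hodd)]
    rw [← hfilter]
    rw [Fin.sum_univ_eq_sum_range (fun k => f (n - 2 * k, k)) (n / 2 + 1)]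
    symm
    refine Finset.sum_nbij' (i := fun a => (n - a) / 2) (j := fun k => n - 2 * k)
      ?_ ?_ ?_ ?_ ?_
    · intro a ha
      simp only [Finset.mem_filter, Finset.mem_range, Nat.even_iff] at ha ⊢
      omega
    · intro k hk
      simp only [Finset.mem_filter, Finset.mem_range, Nat.even_iff] at hk ⊢
      omega
    · intro a ha
      simp only [Finset.mem_filter, Finset.mem_range, Nat.even_iff] at ha
      show n - 2 * ((n - a) / 2) = a
      omega
    · intro k hk
      simp only [Finset.mem_range] at hk
      show (n - (n - 2 * k)) / 2 = k
      omega
    · intro a ha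
      simp only [Finset.mem_filter, Finset.mem_range, Nat.even_iff] at ha
      show g a = f (n - 2 * ((n - a) / 2), (n - a) / 2)
      set k := (n - a) / 2 with hkdef
      have hak : a = n - 2 * k := by omega
      have h2k : 2 * k ≤ n := by omega
      have hco : (Polynomial.hermite n).coeff (n - 2 * k)
          = (-1) ^ k * (2 * k - 1)‼ * Nat.choose n (2 * k) := by
        have h := Polynomial.coeff_hermite_explicit k (n - 2 * k)
        rw [show 2 * k + (n - 2 * k) = n by omega] at h
        rw [h, Nat.choose_symm h2k]
      have hnat : (2 * k - 1)‼ * Nat.choose n (2 * k) * (2 ^ k * k ! * (n - 2 * k)!)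
          = n ! := by
        have h1 := Nat.choose_mul_factorial_mul_factorial h2k
        rw [← h1, factTwoMul k]
        ring
      have hnatR : ((2 * k - 1)‼ : ℝ) * (Nat.choose n (2 * k) : ℝ)
          * ((2 : ℝ) ^ k * (k ! : ℝ) * (((n - 2 * k)!) : ℝ)) = (n ! : ℝ) := by
        exact_mod_cast congrArg (Nat.cast : ℕ → ℝ) hnat
      have htp : (x * t) ^ (n - 2 * k) * t ^ (2 * k) = x ^ (n - 2 * k) * t ^ n := by
        rw [mul_pow, mul_assoc, ← pow_add, show n - 2 * k + 2 * k = n by omega]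
      have hneg : (-(t ^ 2 / 2)) ^ k = (-1) ^ k * t ^ (2 * k) / 2 ^ k := by
        rw [neg_pow, div_pow, ← pow_mul]
        ring
      have hn0 : (n ! : ℝ) ≠ 0 := by positivity
      have hden : (((n - 2 * k)! : ℝ) * (k ! : ℝ)) ≠ 0 := by positivity
      have h20 : (2 : ℝ) ^ k ≠ 0 := by positivity
      rw [hak, hgdef, hfdef]
      simp only
      rw [hco]
      push_cast
      rw [hneg]
      field_simp
      linear_combination (-(n ! : ℝ)) * htp
        + (x ^ (n - 2 * k) * t ^ n) * hnatR
  -- summability over the product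
  have ha : HasSum (fun m : ℕ => (x * t) ^ m / (m ! : ℝ)) (Real.exp (x * t)) := by
    rw [Real.exp_eq_exp_ℝ]
    exact NormedSpace.expSeries_div_hasSum_exp (x * t)
  have hb : HasSum (fun m : ℕ => (-(t ^ 2 / 2)) ^ m / (m ! : ℝ)) (Real.exp (-(t ^ 2 / 2))) := by
    rw [Real.exp_eq_exp_ℝ]
    exact NormedSpace.expSeries_div_hasSum_exp (-(t ^ 2 / 2))
  have hna : Summable fun m : ℕ => ‖(x * t) ^ m / (m ! : ℝ)‖ := by
    have := Real.summable_pow_div_factorial |x * t|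
    refine this.congr fun m => ?_
    rw [norm_div, norm_pow, Real.norm_eq_abs, Real.norm_eq_abs, Nat.abs_cast]
  have hnb : Summable fun m : ℕ => ‖(-(t ^ 2 / 2)) ^ m / (m ! : ℝ)‖ := by
    have := Real.summable_pow_div_factorial |(-(t ^ 2 / 2))|
    refine this.congr fun m => ?_
    rw [norm_div, norm_pow, Real.norm_eq_abs, Real.norm_eq_abs, Nat.abs_cast]
  have hsumf : Summable f := summable_mul_of_summable_norm hna hnb
  have hF : HasSum f (Real.exp (x * t - t ^ 2 / 2)) := by
    have := ha.mul hb hsumf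
    rwa [← Real.exp_add, show x * t + -(t ^ 2 / 2) = x * t - t ^ 2 / 2 by ring] at this
  -- reorganize via the sigma equivalence
  have hmain : HasSum
      (fun n : ℕ => Polynomial.aeval x (Polynomial.hermite n) * t ^ n / (n ! : ℝ))
      (Real.exp (x * t - t ^ 2 / 2)) := by
    have h1 : HasSum (f ∘ ⇑E.symm) (Real.exp (x * t - t ^ 2 / 2)) :=
      E.symm.hasSum_iff.mpr hF
    have h2 := h1.sigma (fun n => hasSum_fintype (fun k : Fin (n / 2 + 1) =>
      (f ∘ ⇑E.symm) ⟨n, k⟩))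
    refine h2.congr_fun fun n => ?_
    rw [← hkey n]
    rfl
  refine ⟨?_, hmain⟩
  -- absolute summability
  have habs : Summable fun p => |f p| := hsumf.abs
  have h1 : Summable ((fun p => |f p|) ∘ ⇑E.symm) := E.symm.summable_iff.mpr habs
  have h2 : Summable fun n : ℕ => ∑ k : Fin (n / 2 + 1), |f (n - 2 * (k : ℕ), (k : ℕ))| := by
    have := h1.hasSum.sigma (fun n => hasSum_fintype (fun k : Fin (n / 2 + 1) =>
      ((fun p => |f p|) ∘ ⇑E.symm) ⟨n, k⟩))
    exact this.summable
  refine h2.of_nonneg_of_le (fun n => abs_nonneg _) fun n => ?_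
  rw [← hkey n]
  exact Finset.abs_sum_le_sum_abs _ _
end
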